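/- Let a, b : ℤ → [0,∞) be finitely supported functions. Then ∑_{n ∈ ℤ} max((a ⊛ b)(n), (a ⊛ b)(n−1)) ≥ 2 · ‖a‖₂ · ‖b‖₂, where ⊛ denotes max-convolution on ℤ. -/

import Mathlib

open MeasureTheory Set intervalIntegral
open scoped Classical Pointwise

set_option maxHeartbeats 1000000

lemma pl_step_integrable (S : Set ℝ) (hS : MeasurableSet S) (α : ℝ) :
    IntervalIntegrable (fun t => if t ∈ S then 2*t else 0) volume 0 α := by
  have h2 : IntervalIntegrable (fun t : ℝ => 2*t) volume 0 α :=
    (continuous_const.mul continuous_id).intervalIntegrable 0 α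
  rw [intervalIntegrable_iff] at h2 ⊢
  have he : (fun t : ℝ => if t ∈ S then 2*t else 0) = S.indicator (fun t => 2*t) := by
    funext t; by_cases h : t ∈ S <;> simp [Set.indicator_apply, h]
  rw [he]
  exact h2.indicator hS

lemma pl_step_integral (C α : ℝ) (hC : 0 ≤ C) (hα : 0 ≤ α) :
    (∫ t in (0:ℝ)..α, (if t ∈ Set.Iic C then 2*t else 0)) = min C α ^ 2 := by
  have heq : Set.EqOn (fun t => if t ∈ Set.Iic C then 2*t else 0)
      (Set.indicator {x : ℝ | x ≤ min C α} (fun t => 2*t)) (Set.uIcc 0 α) := by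
    intro t ht
    rw [Set.uIcc_of_le hα] at ht
    by_cases h : t ∈ Set.Iic C
    · have h2 : t ∈ {x : ℝ | x ≤ min C α} := le_min (Set.mem_Iic.mp h) ht.2
      simp only [if_pos h, Set.indicator_of_mem h2]
    · have h2 : t ∉ {x : ℝ | x ≤ min C α} := fun hh => h (Set.mem_Iic.mpr (le_trans hh (min_le_left _ _)))

      simp only [if_neg h, Set.indicator_of_notMem h2]
  rw [intervalIntegral.integral_congr heq,
    intervalIntegral.integral_indicator (Set.mem_Icc.mpr ⟨le_min hC hα, min_le_right _ _⟩),
    intervalIntegral.integral_const_mul, integral_id]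
  ring

lemma pl_count_eq_sum (s : Finset ℤ) (S : ℤ → Set ℝ) (t : ℝ) :
    2*t*((s.filter fun n => t ∈ S n).card : ℝ) = ∑ n ∈ s, (if t ∈ S n then 2*t else 0) := by
  rw [← Finset.sum_filter, Finset.sum_const, nsmul_eq_mul]
  ring

lemma pl_count_integrable (s : Finset ℤ) (S : ℤ → Set ℝ) (hS : ∀ n, MeasurableSet (S n)) (α : ℝ) :
    IntervalIntegrable (fun t => 2*t*((s.filter fun n => t ∈ S n).card : ℝ)) volume 0 α := by
  have he : (fun t => 2*t*((s.filter fun n => t ∈ S n).card : ℝ))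
      = fun t => ∑ n ∈ s, (if t ∈ S n then 2*t else 0) := by
    funext t; exact pl_count_eq_sum s S t
  rw [he]
  have h3 := IntervalIntegrable.sum s fun n (_ : n ∈ s) => pl_step_integrable (S n) (hS n) α
  have h4 : (∑ i ∈ s, fun t => if t ∈ S i then 2*t else 0)
      = fun t : ℝ => ∑ n ∈ s, (if t ∈ S n then 2*t else 0) := by
    funext t; simp [Finset.sum_apply]
  rwa [h4] at h3

lemma pl_layer_eq (s : Finset ℤ) (f : ℤ → ℝ) (α : ℝ) (hα : 0 ≤ α)
    (h0 : ∀ n ∈ s, 0 ≤ f n) (hle : ∀ n ∈ s, f n ≤ α) :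
    ∑ n ∈ s, f n ^ 2
      = ∫ t in (0:ℝ)..α, 2*t*((s.filter fun n => t ∈ Set.Iic (f n)).card : ℝ) := by
  have he : (fun t : ℝ => 2*t*((s.filter fun n => t ∈ Set.Iic (f n)).card : ℝ))
      = fun t => ∑ n ∈ s, (if t ∈ Set.Iic (f n) then 2*t else 0) :=
    funext fun t => pl_count_eq_sum s _ t
  rw [he]
  rw [intervalIntegral.integral_finset_sum
    (fun n _ => by convert pl_step_integrable (Set.Iic (f n)) measurableSet_Iic α)]
  refine Finset.sum_congr rfl fun n hn => ?_
  have : (∫ t in (0:ℝ)..α, (if t ∈ Set.Iic (f n) then 2*t else 0)) = min (f n) α ^ 2 :=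
    pl_step_integral (f n) α (h0 n hn) hα
  rw [this, min_eq_left (hle n hn)]

lemma pl_layer_le (s : Finset ℤ) (f : ℤ → ℝ) (α : ℝ) (hα : 0 ≤ α)
    (h0 : ∀ n ∈ s, 0 ≤ f n) :
    (∫ t in (0:ℝ)..α, 2*t*((s.filter fun n => t ∈ {x : ℝ | x^2 ≤ f n}).card : ℝ))
      ≤ ∑ n ∈ s, f n := by
  have he : (fun t : ℝ => 2*t*((s.filter fun n => t ∈ {x : ℝ | x^2 ≤ f n}).card : ℝ))
      = fun t => ∑ n ∈ s, (if t ∈ {x : ℝ | x^2 ≤ f n} then 2*t else 0) :=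
    funext fun t => pl_count_eq_sum s _ t
  have hmeas : ∀ n : ℤ, MeasurableSet {x : ℝ | x^2 ≤ f n} := fun n =>
    measurableSet_le ((continuous_pow 2).measurable) measurable_const
  rw [he]
  rw [intervalIntegral.integral_finset_sum (fun n _ => pl_step_integrable _ (hmeas n) α)]
  refine Finset.sum_le_sum fun n hn => ?_
  have heq : Set.EqOn (fun t => if t ∈ {x : ℝ | x^2 ≤ f n} then 2*t else 0)
      (fun t => if t ∈ Set.Iic (Real.sqrt (f n)) then 2*t else 0) (Set.uIcc 0 α) := by
    intro t ht
    rw [Set.uIcc_of_le hα] at ht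
    have : t ∈ {x : ℝ | x^2 ≤ f n} ↔ t ∈ Set.Iic (Real.sqrt (f n)) := by
      simp only [Set.mem_setOf_eq, Set.mem_Iic]
      exact ((Real.le_sqrt ht.1 (h0 n hn)).symm)
    simp only [this]
  rw [intervalIntegral.integral_congr heq,
    pl_step_integral _ α (Real.sqrt_nonneg _) hα]
  calc min (Real.sqrt (f n)) α ^ 2 ≤ Real.sqrt (f n) ^ 2 := by
        apply pow_le_pow_left₀ (le_min (Real.sqrt_nonneg _) hα) (min_le_left _ _)
    _ = f n := Real.sq_sqrt (h0 n hn)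

lemma pl_core (a b : ℤ → ℝ) (ha : ∀ n, 0 ≤ a n) (hb : ∀ n, 0 ≤ b n)
    (hsa : (Function.support a).Finite) (hsb : (Function.support b).Finite)
    (α : ℝ) (hα : 0 < α) (haα : ∀ n, a n ≤ α) (hbα : ∀ n, b n ≤ α)
    (n₀ m₀ : ℤ) (han : a n₀ = α) (hbm : b m₀ = α) :
    (∑' n : ℤ, a n ^ 2) + (∑' n : ℤ, b n ^ 2) ≤
      ∑' n : ℤ, max (⨆ m : ℤ, a (n - m) * b m) (⨆ m : ℤ, a (n - 1 - m) * b m) := by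
  classical
  set sa := hsa.toFinset with hsadef
  set sb := hsb.toFinset with hsbdef
  set c : ℤ → ℝ := fun n => ⨆ m : ℤ, a (n - m) * b m with hc
  have hbdd : ∀ n : ℤ, BddAbove (Set.range fun m => a (n - m) * b m) := by
    intro n
    refine ⟨α * α, ?_⟩
    rintro x ⟨m, rfl⟩
    exact mul_le_mul (haα _) (hbα _) (hb _) hα.le
  have hc_ge : ∀ n m : ℤ, a (n - m) * b m ≤ c n := fun n m => le_ciSup (hbdd n) m
  have hc_nonneg : ∀ n, 0 ≤ c n := fun n =>
    Real.iSup_nonneg fun m => mul_nonneg (ha _) (hb _)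
  have hc0 : ∀ n : ℤ, n ∉ sa + sb → c n = 0 := by
    intro n hn
    have hz : ∀ m : ℤ, a (n - m) * b m = 0 := by
      intro m
      by_contra h
      have h1 : a (n - m) ≠ 0 := fun hh => h (by rw [hh, zero_mul])
      have h2 : b m ≠ 0 := fun hh => h (by rw [hh, mul_zero])
      refine hn ?_
      have hnm : n = (n - m) + m := by ring
      rw [hnm]
      exact Finset.add_mem_add (hsa.mem_toFinset.mpr h1) (hsb.mem_toFinset.mpr h2)
    rw [hc]
    simp only
    rw [show (fun m : ℤ => a (n - m) * b m) = fun _ : ℤ => (0:ℝ) from funext hz]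
    exact ciSup_const
  set d : ℤ → ℝ := fun n => max (c n) (c (n - 1)) with hd
  have hd_nonneg : ∀ n, 0 ≤ d n := fun n => le_trans (hc_nonneg n) (le_max_left _ _)
  set U : Finset ℤ := (sa + sb) ∪ (Finset.image (· + 1) (sa + sb)) with hU
  have hd0 : ∀ n : ℤ, n ∉ U → d n = 0 := by
    intro n hn
    rw [hU, Finset.mem_union, not_or] at hn
    have h1 : c n = 0 := hc0 n hn.1
    have h2 : c (n - 1) = 0 := by
      apply hc0
      intro hmem
      exact hn.2 (Finset.mem_image.mpr ⟨n - 1, hmem, by ring⟩)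
    rw [hd]
    simp only [h1, h2, max_self]
  have hta : ∑' n : ℤ, a n ^ 2 = ∑ n ∈ sa, a n ^ 2 :=
    tsum_eq_sum (fun n hn => by
      have hz : a n = 0 := by
        by_contra h; exact hn (hsa.mem_toFinset.mpr h)
      rw [hz]; ring)
  have htb : ∑' n : ℤ, b n ^ 2 = ∑ n ∈ sb, b n ^ 2 :=
    tsum_eq_sum (fun n hn => by
      have hz : b n = 0 := by
        by_contra h; exact hn (hsb.mem_toFinset.mpr h)
      rw [hz]; ring)
  have htd : (∑' n : ℤ, max (⨆ m : ℤ, a (n - m) * b m) (⨆ m : ℤ, a (n - 1 - m) * b m))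
      = ∑ n ∈ U, d n :=
    tsum_eq_sum (fun n hn => hd0 n hn)
  have hmemn₀ : n₀ ∈ sa := hsa.mem_toFinset.mpr (by rw [Function.mem_support, han]; exact ne_of_gt hα)
  have hmemm₀ : m₀ ∈ sb := hsb.mem_toFinset.mpr (by rw [Function.mem_support, hbm]; exact ne_of_gt hα)
  have hcardN : ∀ t : ℝ, 0 ≤ t → t ≤ α →
      (sa.filter fun n => t ∈ Set.Iic (a n)).card + (sb.filter fun n => t ∈ Set.Iic (b n)).card
        ≤ (U.filter fun n => t ∈ {x : ℝ | x^2 ≤ d n}).card := by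
    intro t ht0 htα
    set A := sa.filter fun n => t ∈ Set.Iic (a n) with hA
    set B := sb.filter fun n => t ∈ Set.Iic (b n) with hB
    have hAne : A.Nonempty := ⟨n₀, Finset.mem_filter.mpr ⟨hmemn₀, by
      rw [Set.mem_Iic, han]; exact htα⟩⟩
    have hBne : B.Nonempty := ⟨m₀, Finset.mem_filter.mpr ⟨hmemm₀, by
      rw [Set.mem_Iic, hbm]; exact htα⟩⟩
    have hABne : (A + B).Nonempty := hAne.add hBne
    have hkey : ∀ n ∈ A + B, n ∈ sa + sb ∧ t^2 ≤ c n := by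
      intro n hn
      obtain ⟨x, hx, y, hy, rfl⟩ := Finset.mem_add.mp hn
      obtain ⟨hxsa, hxt⟩ := Finset.mem_filter.mp hx
      obtain ⟨hysb, hyt⟩ := Finset.mem_filter.mp hy
      rw [Set.mem_Iic] at hxt hyt
      refine ⟨Finset.add_mem_add hxsa hysb, ?_⟩
      have h1 : t * t ≤ a x * b y := mul_le_mul hxt hyt ht0 (ha x)
      have h2 : a x * b y ≤ c (x + y) := by
        have hxy : x + y - y = x := by ring
        have := hc_ge (x + y) y
        rwa [hxy] at this
      calc t^2 = t * t := sq t
        _ ≤ a x * b y := h1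
        _ ≤ c (x + y) := h2
    have hsub : (A + B) ∪ (Finset.image (· + 1) (A + B))
        ⊆ U.filter fun n => t ∈ {x : ℝ | x^2 ≤ d n} := by
      intro n hn
      rcases Finset.mem_union.mp hn with h | h
      · obtain ⟨h1, h2⟩ := hkey n h
        refine Finset.mem_filter.mpr ⟨by rw [hU]; exact Finset.mem_union_left _ h1, ?_⟩
        exact le_trans h2 (le_max_left _ _)
      · obtain ⟨m, hm, rfl⟩ := Finset.mem_image.mp h
        obtain ⟨h1, h2⟩ := hkey m hm
        refine Finset.mem_filter.mpr ⟨by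
          rw [hU]; exact Finset.mem_union_right _ (Finset.mem_image.mpr ⟨m, h1, rfl⟩), ?_⟩
        have hm1 : m + 1 - 1 = m := by ring
        show t^2 ≤ d (m + 1)
        rw [hd]
        simp only [hm1]
        exact le_trans h2 (le_max_right _ _)
    have hM : ((A + B).max' hABne + 1) ∉ A + B := by
      intro hmem
      have := Finset.le_max' (A + B) _ hmem
      omega
    have hMin : ((A + B).max' hABne + 1) ∈ Finset.image (· + 1) (A + B) :=
      Finset.mem_image.mpr ⟨_, (A + B).max'_mem hABne, rfl⟩
    have hc1 : (A + B).card + 1 ≤ ((A + B) ∪ Finset.image (· + 1) (A + B)).card := by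
      have hins : insert ((A + B).max' hABne + 1) (A + B)
          ⊆ (A + B) ∪ Finset.image (· + 1) (A + B) := by
        intro x hx
        rcases Finset.mem_insert.mp hx with rfl | hx
        · exact Finset.mem_union_right _ hMin
        · exact Finset.mem_union_left _ hx
      calc (A + B).card + 1 = (insert ((A + B).max' hABne + 1) (A + B)).card :=
            (Finset.card_insert_of_notMem hM).symm
        _ ≤ _ := Finset.card_le_card hins
    have hc2 : A.card + B.card - 1 ≤ (A + B).card :=
      cauchy_davenport_add_of_linearOrder_isCancelAdd hAne hBne
    have hc3 := Finset.card_le_card hsub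
    have hA1 : 1 ≤ A.card := Finset.card_pos.mpr hAne
    omega
  have hα0 : (0:ℝ) ≤ α := hα.le
  have h1 : ∑ n ∈ sa, a n ^ 2
      = ∫ t in (0:ℝ)..α, 2*t*((sa.filter fun n => t ∈ Set.Iic (a n)).card : ℝ) :=
    pl_layer_eq sa a α hα0 (fun n _ => ha n) (fun n _ => haα n)
  have h2 : ∑ n ∈ sb, b n ^ 2
      = ∫ t in (0:ℝ)..α, 2*t*((sb.filter fun n => t ∈ Set.Iic (b n)).card : ℝ) :=
    pl_layer_eq sb b α hα0 (fun n _ => hb n) (fun n _ => hbα n)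
  have h3 : (∫ t in (0:ℝ)..α, 2*t*((U.filter fun n => t ∈ {x : ℝ | x^2 ≤ d n}).card : ℝ))
      ≤ ∑ n ∈ U, d n :=
    pl_layer_le U d α hα0 (fun n _ => hd_nonneg n)
  have hia : IntervalIntegrable
      (fun t => 2*t*((sa.filter fun n => t ∈ Set.Iic (a n)).card : ℝ)) volume 0 α :=
    pl_count_integrable sa _ (fun n => measurableSet_Iic) α
  have hib : IntervalIntegrable
      (fun t => 2*t*((sb.filter fun n => t ∈ Set.Iic (b n)).card : ℝ)) volume 0 α :=
    pl_count_integrable sb _ (fun n => measurableSet_Iic) α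
  have hid : IntervalIntegrable
      (fun t => 2*t*((U.filter fun n => t ∈ {x : ℝ | x^2 ≤ d n}).card : ℝ)) volume 0 α :=
    pl_count_integrable U _ (fun n =>
      measurableSet_le ((continuous_pow 2).measurable) measurable_const) α
  have h4 : (∫ t in (0:ℝ)..α, (2*t*((sa.filter fun n => t ∈ Set.Iic (a n)).card : ℝ)
        + 2*t*((sb.filter fun n => t ∈ Set.Iic (b n)).card : ℝ)))
      ≤ ∫ t in (0:ℝ)..α, 2*t*((U.filter fun n => t ∈ {x : ℝ | x^2 ≤ d n}).card : ℝ) := by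
    refine intervalIntegral.integral_mono_on hα0 (hia.add hib) hid ?_
    intro t ht
    have hcc := hcardN t ht.1 ht.2
    have h2t : (0:ℝ) ≤ 2*t := by linarith [ht.1]
    have hcast : ((sa.filter fun n => t ∈ Set.Iic (a n)).card : ℝ)
        + ((sb.filter fun n => t ∈ Set.Iic (b n)).card : ℝ)
        ≤ ((U.filter fun n => t ∈ {x : ℝ | x^2 ≤ d n}).card : ℝ) := by
      exact_mod_cast hcc
    calc 2*t*((sa.filter fun n => t ∈ Set.Iic (a n)).card : ℝ)
          + 2*t*((sb.filter fun n => t ∈ Set.Iic (b n)).card : ℝ)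
        = 2*t*(((sa.filter fun n => t ∈ Set.Iic (a n)).card : ℝ)
          + ((sb.filter fun n => t ∈ Set.Iic (b n)).card : ℝ)) := by ring
      _ ≤ 2*t*((U.filter fun n => t ∈ {x : ℝ | x^2 ≤ d n}).card : ℝ) :=
        mul_le_mul_of_nonneg_left hcast h2t
  rw [hta, htb, htd, h1, h2, ← intervalIntegral.integral_add hia hib]
  exact le_trans h4 h3

theorem discrete_prekopa_leindler_half
    (a b : ℤ → ℝ) (ha : ∀ n, 0 ≤ a n) (hb : ∀ n, 0 ≤ b n)
    (hsa : (Function.support a).Finite) (hsb : (Function.support b).Finite) :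
    ∑' n : ℤ, max (⨆ m : ℤ, a (n - m) * b m) (⨆ m : ℤ, a (n - 1 - m) * b m) ≥
      2 * Real.sqrt (∑' n : ℤ, a n ^ 2) * Real.sqrt (∑' n : ℤ, b n ^ 2) := by
  classical
  have hLHS0 : 0 ≤ ∑' n : ℤ, max (⨆ m : ℤ, a (n - m) * b m) (⨆ m : ℤ, a (n - 1 - m) * b m) :=
    tsum_nonneg fun n => le_trans (Real.iSup_nonneg fun m => mul_nonneg (ha _) (hb _))
      (le_max_left _ _)
  by_cases hA : ∀ n, a n = 0
  · have hX : ∑' n : ℤ, a n ^ 2 = 0 := by simp [hA]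
    rw [ge_iff_le, hX, Real.sqrt_zero, mul_zero, zero_mul]
    exact hLHS0
  by_cases hB : ∀ n, b n = 0
  · have hY : ∑' n : ℤ, b n ^ 2 = 0 := by simp [hB]
    rw [ge_iff_le, hY, Real.sqrt_zero, mul_zero]
    exact hLHS0
  push_neg at hA hB
  obtain ⟨n₁, hn₁⟩ := hA
  obtain ⟨m₁, hm₁⟩ := hB
  have hn₁mem : n₁ ∈ hsa.toFinset := hsa.mem_toFinset.mpr hn₁
  have hm₁mem : m₁ ∈ hsb.toFinset := hsb.mem_toFinset.mpr hm₁
  have hnea : hsa.toFinset.Nonempty := ⟨n₁, hn₁mem⟩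
  have hneb : hsb.toFinset.Nonempty := ⟨m₁, hm₁mem⟩
  set α₀ := hsa.toFinset.sup' hnea a with hα₀def
  set β₀ := hsb.toFinset.sup' hneb b with hβ₀def
  obtain ⟨n₀, hn₀mem, hn₀⟩ := Finset.exists_mem_eq_sup' hnea a
  obtain ⟨m₀, hm₀mem, hm₀⟩ := Finset.exists_mem_eq_sup' hneb b
  have hα₀ : 0 < α₀ := lt_of_lt_of_le (lt_of_le_of_ne (ha n₁) (Ne.symm hn₁))
    (Finset.le_sup' a hn₁mem)
  have hβ₀ : 0 < β₀ := lt_of_lt_of_le (lt_of_le_of_ne (hb m₁) (Ne.symm hm₁))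
    (Finset.le_sup' b hm₁mem)
  have hale : ∀ n, a n ≤ α₀ := by
    intro n
    by_cases h : n ∈ hsa.toFinset
    · exact Finset.le_sup' a h
    · have : a n = 0 := by
        by_contra hh; exact h (hsa.mem_toFinset.mpr hh)
      rw [this]; exact hα₀.le
  have hble : ∀ n, b n ≤ β₀ := by
    intro n
    by_cases h : n ∈ hsb.toFinset
    · exact Finset.le_sup' b h
    · have : b n = 0 := by
        by_contra hh; exact h (hsb.mem_toFinset.mpr hh)
      rw [this]; exact hβ₀.le
  set l := Real.sqrt (β₀ / α₀) with hldef
  have hl : 0 < l := Real.sqrt_pos.mpr (div_pos hβ₀ hα₀)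
  have hl2 : l ^ 2 = β₀ / α₀ := Real.sq_sqrt (div_pos hβ₀ hα₀).le
  have hba : l * α₀ * l = β₀ := by
    rw [show l * α₀ * l = l ^ 2 * α₀ by ring, hl2, div_mul_cancel₀ _ (ne_of_gt hα₀)]
  set a' : ℤ → ℝ := fun n => l * a n with ha'def
  set b' : ℤ → ℝ := fun n => b n / l with hb'def
  have ha' : ∀ n, 0 ≤ a' n := fun n => mul_nonneg hl.le (ha n)
  have hb' : ∀ n, 0 ≤ b' n := fun n => div_nonneg (hb n) hl.le
  have hsa' : (Function.support a').Finite := hsa.subset (by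
    intro n hn
    rw [Function.mem_support] at hn ⊢
    intro hz
    exact hn (by rw [ha'def]; simp [hz]))
  have hsb' : (Function.support b').Finite := hsb.subset (by
    intro n hn
    rw [Function.mem_support] at hn ⊢
    intro hz
    exact hn (by rw [hb'def]; simp [hz]))
  have hM : 0 < l * α₀ := mul_pos hl hα₀
  have ha'le : ∀ n, a' n ≤ l * α₀ := fun n => mul_le_mul_of_nonneg_left (hale n) hl.le
  have hb'le : ∀ n, b' n ≤ l * α₀ := by
    intro n
    rw [hb'def]
    simp only
    rw [div_le_iff₀ hl]
    calc b n ≤ β₀ := hble n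
      _ = l * α₀ * l := hba.symm
  have ha'eq : a' n₀ = l * α₀ := by rw [ha'def]; simp only; rw [← hn₀]
  have hb'eq : b' m₀ = l * α₀ := by
    rw [hb'def]
    simp only
    rw [div_eq_iff (ne_of_gt hl)]
    rw [show b m₀ = β₀ from by rw [hβ₀def, hm₀]]
    exact hba.symm
  have key := pl_core a' b' ha' hb' hsa' hsb' (l * α₀) hM ha'le hb'le n₀ m₀ ha'eq hb'eq
  have hmul : ∀ x y : ℝ, (l * x) * (y / l) = x * y := by
    intro x y; field_simp
  have hsup : ∀ n : ℤ, (⨆ m : ℤ, a' (n - m) * b' m) = ⨆ m : ℤ, a (n - m) * b m := by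
    intro n
    exact iSup_congr fun m => hmul _ _
  have hX : 0 ≤ ∑' n : ℤ, a n ^ 2 := tsum_nonneg fun n => sq_nonneg _
  have hY : 0 ≤ ∑' n : ℤ, b n ^ 2 := tsum_nonneg fun n => sq_nonneg _
  have hsum_a : ∑' n : ℤ, a' n ^ 2 = l ^ 2 * ∑' n : ℤ, a n ^ 2 := by
    simp only [ha'def, mul_pow]
    exact tsum_mul_left
  have hsum_b : ∑' n : ℤ, b' n ^ 2 = (∑' n : ℤ, b n ^ 2) / l ^ 2 := by
    simp only [hb'def, div_pow]
    exact tsum_div_const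
  rw [ge_iff_le]
  have hx := Real.sq_sqrt hX
  have hy := Real.sq_sqrt hY
  set x := Real.sqrt (∑' n : ℤ, a n ^ 2)
  set y := Real.sqrt (∑' n : ℤ, b n ^ 2)
  calc 2 * x * y ≤ l ^ 2 * x ^ 2 + y ^ 2 / l ^ 2 := by
        have hident : (l * x - y / l) ^ 2 = l ^ 2 * x ^ 2 - 2 * (x * y) + y ^ 2 / l ^ 2 := by
          field_simp
          ring
        nlinarith [sq_nonneg (l * x - y / l)]
    _ = (∑' n : ℤ, a' n ^ 2) + ∑' n : ℤ, b' n ^ 2 := by rw [hsum_a, hsum_b, hx, hy]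
    _ ≤ ∑' n : ℤ, max (⨆ m : ℤ, a' (n - m) * b' m) (⨆ m : ℤ, a' (n - 1 - m) * b' m) := key
    _ = ∑' n : ℤ, max (⨆ m : ℤ, a (n - m) * b m) (⨆ m : ℤ, a (n - 1 - m) * b m) :=
        tsum_congr fun n => by rw [hsup n, hsup (n - 1)]
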